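/- Let ħ > 0, let V : ℝ³ × I → ℝ be smooth on an open time interval I, and let η : ℝ³ × I → ℝ be a smooth strictly positive function satisfying the backward heat equation with potential V: ħ ∂η/∂t = −(ħ²/2) Δη + V η. Define the forward drift B := ħ ∇ log η. Then ∂B/∂t + (B·∇)B + (ħ/2) ΔB = ∇V. -/

import Mathlib

open MeasureTheory Real Set

noncomputable section

/-- Time partial derivative of a function of space `x ∈ ℝ³` and time `t`. -/
def pt (f : (Fin 3 → ℝ) → ℝ → ℝ) (x : Fin 3 → ℝ) (t : ℝ) : ℝ := deriv (f x) t

/-- Spatial partial derivative `∂/∂x_i` of a function of space and time. -/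
def pd (i : Fin 3) (f : (Fin 3 → ℝ) → ℝ → ℝ) (x : Fin 3 → ℝ) (t : ℝ) : ℝ :=
  deriv (fun s => f (Function.update x i s) t) (x i)

/-- Spatial Laplacian `Δ = Σᵢ ∂²/∂x_i²` of a function of space and time. -/
def lap (f : (Fin 3 → ℝ) → ℝ → ℝ) (x : Fin 3 → ℝ) (t : ℝ) : ℝ := ∑ i, pd i (pd i f) x t

/-- Spatial partial derivative `∂/∂x_i` of a function of space only. -/
def pds (i : Fin 3) (f : (Fin 3 → ℝ) → ℝ) (x : Fin 3 → ℝ) : ℝ :=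
  deriv (fun s => f (Function.update x i s)) (x i)

open Topology

abbrev E3 := (Fin 3 → ℝ) × ℝ
def Dv (v : E3) (H : E3 → ℝ) : E3 → ℝ := fun p => fderiv ℝ H p v



/-- Directional derivative field. -/

lemma diffAt_of_smooth {U : Set E3} (hU : IsOpen U) {H : E3 → ℝ}
    (hH : ContDiffOn ℝ (⊤ : ℕ∞) H U) {p : E3} (hp : p ∈ U) :
    DifferentiableAt ℝ H p :=
  (hH.contDiffAt (hU.mem_nhds hp)).differentiableAt (by simp)

lemma Dv_smooth {U : Set E3} (hU : IsOpen U) {H : E3 → ℝ}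
    (hH : ContDiffOn ℝ (⊤ : ℕ∞) H U) (v : E3) :
    ContDiffOn ℝ (⊤ : ℕ∞) (Dv v H) U :=
  (hH.fderiv_of_isOpen hU (by simp)).clm_apply contDiffOn_const

lemma Dv_congr {U : Set E3} (hU : IsOpen U) {H1 H2 : E3 → ℝ}
    (h : ∀ q ∈ U, H1 q = H2 q) {p : E3} (hp : p ∈ U) (v : E3) :
    Dv v H1 p = Dv v H2 p := by
  have : H1 =ᶠ[𝓝 p] H2 := by
    filter_upwards [hU.mem_nhds hp] with q hq using h q hq
  simp only [Dv, this.fderiv_eq]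

lemma Dv_comm {U : Set E3} (hU : IsOpen U) {H : E3 → ℝ}
    (hH : ContDiffOn ℝ (⊤ : ℕ∞) H U) {p : E3} (hp : p ∈ U) (v w : E3) :
    Dv w (Dv v H) p = Dv v (Dv w H) p := by
  have hfd : ContDiffOn ℝ (⊤ : ℕ∞) (fderiv ℝ H) U := hH.fderiv_of_isOpen hU (by simp)
  have hx : HasFDerivAt (fderiv ℝ H) (fderiv ℝ (fderiv ℝ H) p) p :=
    ((hfd.contDiffAt (hU.mem_nhds hp)).differentiableAt
      (by simp)).hasFDerivAt
  have hd1 : ∀ᶠ q in 𝓝 p, HasFDerivAt H (fderiv ℝ H q) q := by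
    filter_upwards [hU.mem_nhds hp] with q hq using
      (diffAt_of_smooth hU hH hq).hasFDerivAt
  have hsym := second_derivative_symmetric_of_eventually hd1 hx
  have Hv := (hx.clm_apply (hasFDerivAt_const v p)).fderiv
  have Hw := (hx.clm_apply (hasFDerivAt_const w p)).fderiv
  show fderiv ℝ (fun q => fderiv ℝ H q v) p w = fderiv ℝ (fun q => fderiv ℝ H q w) p v
  rw [Hv, Hw]
  simp [hsym v w]


lemma Dv_add {H1 H2 : E3 → ℝ} {p : E3} (h1 : DifferentiableAt ℝ H1 p)
    (h2 : DifferentiableAt ℝ H2 p) (v : E3) :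
    Dv v (fun q => H1 q + H2 q) p = Dv v H1 p + Dv v H2 p := by
  simp only [Dv]; rw [fderiv_fun_add h1 h2]; simp

lemma Dv_mul {H1 H2 : E3 → ℝ} {p : E3} (h1 : DifferentiableAt ℝ H1 p)
    (h2 : DifferentiableAt ℝ H2 p) (v : E3) :
    Dv v (fun q => H1 q * H2 q) p = H1 p * Dv v H2 p + H2 p * Dv v H1 p := by
  simp only [Dv]; rw [fderiv_fun_mul h1 h2]; simp [mul_comm]

lemma Dv_const_mul {H : E3 → ℝ} {p : E3} (h : DifferentiableAt ℝ H p) (c : ℝ) (v : E3) :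
    Dv v (fun q => c * H q) p = c * Dv v H p := by
  simp only [Dv]; rw [fderiv_const_mul h c]; simp

lemma Dv_sum {n : ℕ} {H : Fin n → E3 → ℝ} {p : E3}
    (h : ∀ j, DifferentiableAt ℝ (H j) p) (v : E3) :
    Dv v (fun q => ∑ j, H j q) p = ∑ j, Dv v (H j) p := by
  simp only [Dv]; rw [fderiv_fun_sum (fun j _ => h j)]; simp

lemma Dv_sq {H : E3 → ℝ} {p : E3} (h : DifferentiableAt ℝ H p) (v : E3) :
    Dv v (fun q => (H q) ^ 2) p = 2 * H p * Dv v H p := by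
  have : (fun q => (H q) ^ 2) = fun q => H q * H q := by funext q; ring
  rw [this, Dv_mul h h]; ring

lemma Dv_log {U : Set E3} (hU : IsOpen U) {H : E3 → ℝ}
    (hH : ContDiffOn ℝ (⊤ : ℕ∞) H U) (hpos : ∀ p ∈ U, 0 < H p)
    {p : E3} (hp : p ∈ U) (v : E3) :
    Dv v H p = H p * Dv v (fun q => Real.log (H q)) p := by
  have hd : DifferentiableAt ℝ H p :=
    (hH.contDiffAt (hU.mem_nhds hp)).differentiableAt (by simp)
  have hlog := hd.hasFDerivAt.log (ne_of_gt (hpos p hp))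
  simp only [Dv, hlog.fderiv, ContinuousLinearMap.smul_apply, smul_eq_mul]
  rw [← mul_assoc, mul_inv_cancel₀ (ne_of_gt (hpos p hp)), one_mul]

lemma hasDerivAt_updateLine (x : Fin 3 → ℝ) (i : Fin 3) (t s : ℝ) :
    HasDerivAt (fun s' : ℝ => ((Function.update x i s' : Fin 3 → ℝ), t))
      (((Pi.single i 1 : Fin 3 → ℝ)), (0 : ℝ)) s := by
  have h0 : ∀ s' : ℝ, Function.update x i s' = x + (s' - x i) • (Pi.single i 1 : Fin 3 → ℝ) := by
    intro s'; funext j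
    rcases eq_or_ne j i with rfl | h
    · simp
    · simp [Function.update_of_ne h, Pi.single_eq_of_ne h]
  have h1 : HasDerivAt (fun s' : ℝ => x + (s' - x i) • (Pi.single i 1 : Fin 3 → ℝ))
      (Pi.single i 1) s := by
    simpa using (((hasDerivAt_id s).sub_const (x i)).smul_const
      ((Pi.single i 1 : Fin 3 → ℝ))).const_add x
  simp only [h0]
  exact h1.prodMk (hasDerivAt_const s t)

lemma deriv_line (H : E3 → ℝ) (i : Fin 3) (x : Fin 3 → ℝ) (t : ℝ)
    (hH : DifferentiableAt ℝ H (x, t)) :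
    deriv (fun s => H (Function.update x i s, t)) (x i)
      = Dv ((Pi.single i 1 : Fin 3 → ℝ), (0 : ℝ)) H (x, t) := by
  have hγ := hasDerivAt_updateLine x i t (x i)
  have hH' : HasFDerivAt H (fderiv ℝ H (x, t)) (Function.update x i (x i), t) := by
    rw [Function.update_eq_self]; exact hH.hasFDerivAt
  have h2 := hH'.comp_hasDerivAt (x i) hγ
  simpa [Function.comp_def, Dv] using h2.deriv

lemma deriv_timeLine (H : E3 → ℝ) (x : Fin 3 → ℝ) (t : ℝ)
    (hH : DifferentiableAt ℝ H (x, t)) :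
    deriv (fun s => H (x, s)) t = Dv ((0 : Fin 3 → ℝ), (1 : ℝ)) H (x, t) := by
  have hγ : HasDerivAt (fun s : ℝ => ((x : Fin 3 → ℝ), s)) ((0 : Fin 3 → ℝ), (1 : ℝ)) t :=
    (hasDerivAt_const t x).prodMk (hasDerivAt_id t)
  have h2 := hH.hasFDerivAt.comp_hasDerivAt t hγ
  simpa [Function.comp_def, Dv] using h2.deriv

/-- **Stochastic Newton equation** (case `A = 0`).  If `η > 0` is smooth on `ℝ³ × I` and
solves the backward heat equation with (possibly time dependent) potential `V`,
`ħ ∂η/∂t = −(ħ²/2)Δη + Vη`, then the forward drift `B := ħ∇log η` satisfies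
`∂B/∂t + (B·∇)B + (ħ/2)ΔB = ∇V`. -/
theorem stochastic_newton_equation
    (hbar : ℝ) (hhbar : 0 < hbar)
    (I : Set ℝ) (hI : IsOpen I)
    (V : (Fin 3 → ℝ) → ℝ → ℝ)
    (hV : ContDiffOn ℝ (⊤ : ℕ∞) (fun p : (Fin 3 → ℝ) × ℝ => V p.1 p.2) (univ ×ˢ I))
    (η : (Fin 3 → ℝ) → ℝ → ℝ)
    (hsmooth : ContDiffOn ℝ (⊤ : ℕ∞) (fun p : (Fin 3 → ℝ) × ℝ => η p.1 p.2) (univ ×ˢ I))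
    (hpos : ∀ x, ∀ t ∈ I, 0 < η x t)
    (hPDE : ∀ x, ∀ t ∈ I,
      hbar * pt η x t = -(hbar ^ 2 / 2) * lap η x t + V x t * η x t)
    (B : (Fin 3 → ℝ) → ℝ → Fin 3 → ℝ)
    (hB : ∀ x t i, B x t i = hbar * pd i (fun y s => Real.log (η y s)) x t) :
    ∀ x, ∀ t ∈ I, ∀ i,
      pt (fun y s => B y s i) x t
        + (∑ j, B x t j * pd j (fun y s => B y s i) x t)
        + (hbar / 2) * lap (fun y s => B y s i) x t
      = pd i V x t := by
  intro x t ht i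
  have hUo : IsOpen ((univ ×ˢ I : Set E3)) := isOpen_univ.prod hI
  set U : Set E3 := univ ×ˢ I with hUdef
  set F : E3 → ℝ := fun p => η p.1 p.2 with hFdef
  set G : E3 → ℝ := fun p => V p.1 p.2 with hGdef
  set L : E3 → ℝ := fun p => Real.log (F p) with hLdef
  set e : Fin 3 → E3 := fun j => ((Pi.single j 1 : Fin 3 → ℝ), (0 : ℝ)) with hedef
  set τ : E3 := ((0 : Fin 3 → ℝ), (1 : ℝ)) with hτdef
  have hF : ContDiffOn ℝ (⊤ : ℕ∞) F U := hsmooth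
  have hG : ContDiffOn ℝ (⊤ : ℕ∞) G U := hV
  have hFpos : ∀ p ∈ U, 0 < F p := fun p hp => hpos p.1 p.2 hp.2
  have hL : ContDiffOn ℝ (⊤ : ℕ∞) L U := hF.log (fun p hp => (hFpos p hp).ne')
  have dAt : ∀ {H : E3 → ℝ}, ContDiffOn ℝ (⊤ : ℕ∞) H U → ∀ {p : E3}, p ∈ U →
      DifferentiableAt ℝ H p := fun {H} hH {p} hp => diffAt_of_smooth hUo hH hp
  have hmem : ∀ (y : Fin 3 → ℝ) {s : ℝ}, s ∈ I → ((y, s) : E3) ∈ U :=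
    fun y s hs => ⟨mem_univ _, hs⟩
  have hp₀ : ((x, t) : E3) ∈ U := hmem x ht
  have hLi : ∀ v : E3, ContDiffOn ℝ (⊤ : ℕ∞) (Dv v L) U := fun v => Dv_smooth hUo hL v
  have hLiv : ∀ v w : E3, ContDiffOn ℝ (⊤ : ℕ∞) (Dv w (Dv v L)) U :=
    fun v w => Dv_smooth hUo (hLi v) w
  -- chain rule on U
  have hchain : ∀ p ∈ U, ∀ v : E3, Dv v F p = F p * Dv v L p := fun p hp v =>
    Dv_log hUo hF hFpos hp v
  -- second derivatives of F
  have hsec : ∀ p ∈ U, ∀ v w : E3,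
      Dv w (Dv v F) p = F p * (Dv w L p * Dv v L p + Dv w (Dv v L) p) := by
    intro p hp v w
    have h1 : Dv w (Dv v F) p = Dv w (fun q => F q * Dv v L q) p :=
      Dv_congr hUo (fun q hq => hchain q hq v) hp w
    rw [h1, Dv_mul (dAt hF hp) (dAt (hLi v) hp), hchain p hp w]
    ring
  -- HJB equation on U
  have hHJB : ∀ p ∈ U, hbar * Dv τ L p
      = -(hbar ^ 2 / 2) * (∑ j, (Dv (e j) L p * Dv (e j) L p + Dv (e j) (Dv (e j) L) p))
        + G p := by
    rintro ⟨y, s⟩ hp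
    have hs : s ∈ I := hp.2
    have hPDE' := hPDE y s hs
    have h1 : pt η y s = Dv τ F (y, s) := deriv_timeLine F y s (dAt hF hp)
    have h2 : lap η y s = ∑ j, Dv (e j) (Dv (e j) F) (y, s) := by
      unfold lap
      refine Finset.sum_congr rfl (fun j _ => ?_)
      have hinner : ∀ z : Fin 3 → ℝ, pd j η z s = Dv (e j) F (z, s) := fun z =>
        deriv_line F j z s (dAt hF (hmem z hs))
      have hout : pd j (pd j η) y s
          = deriv (fun r => Dv (e j) F (Function.update y j r, s)) (y j) := by
        unfold pd
        congr 1
        funext r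
        exact hinner _
      rw [hout]
      exact deriv_line (Dv (e j) F) j y s (dAt (Dv_smooth hUo hF (e j)) hp)
    rw [h1, h2, hchain _ hp τ] at hPDE'
    have h3 : ∀ j : Fin 3, Dv (e j) (Dv (e j) F) (y, s)
        = F (y, s) * (Dv (e j) L (y, s) * Dv (e j) L (y, s) + Dv (e j) (Dv (e j) L) (y, s)) :=
      fun j => hsec _ hp (e j) (e j)
    simp only [h3] at hPDE'
    rw [← Finset.mul_sum] at hPDE'
    have hFne : F (y, s) ≠ 0 := (hFpos _ hp).ne'
    apply mul_left_cancel₀ hFne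
    linear_combination hPDE'
  -- differentiate HJB in direction e i at (x,t)
  have hSd : ∀ (j : Fin 3) (q : E3), q ∈ U → DifferentiableAt ℝ
      (fun q => Dv (e j) L q * Dv (e j) L q + Dv (e j) (Dv (e j) L) q) q :=
    fun j q hq => (((dAt (hLi (e j)) hq).mul (dAt (hLi (e j)) hq)).add (dAt (hLiv (e j) (e j)) hq))
  have hSsmooth : ContDiffOn ℝ (⊤ : ℕ∞)
      (fun q => ∑ j, (Dv (e j) L q * Dv (e j) L q + Dv (e j) (Dv (e j) L) q)) U := by
    apply ContDiffOn.sum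
    intro j _
    exact ((hLi (e j)).mul (hLi (e j))).add (hLiv (e j) (e j))
  have hdHJB : hbar * Dv (e i) (Dv τ L) (x, t)
      = -(hbar ^ 2 / 2) * (∑ j, (2 * Dv (e j) L (x, t) * Dv (e i) (Dv (e j) L) (x, t)
          + Dv (e i) (Dv (e j) (Dv (e j) L)) (x, t)))
        + Dv (e i) G (x, t) := by
    have hcong : Dv (e i) (fun q => hbar * Dv τ L q) (x, t)
        = Dv (e i) (fun q => -(hbar ^ 2 / 2)
            * (∑ j, (Dv (e j) L q * Dv (e j) L q + Dv (e j) (Dv (e j) L) q)) + G q) (x, t) :=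
      Dv_congr hUo (fun q hq => hHJB q hq) hp₀ (e i)
    rw [Dv_const_mul (dAt (hLi τ) hp₀) hbar (e i)] at hcong
    rw [Dv_add ((contDiffOn_const.mul hSsmooth).differentiableOn (by simp)
        |>.differentiableAt (hUo.mem_nhds hp₀)) (dAt hG hp₀) (e i)] at hcong
    rw [Dv_const_mul ((hSsmooth.differentiableOn (by simp)).differentiableAt
        (hUo.mem_nhds hp₀)) (-(hbar ^ 2 / 2)) (e i)] at hcong
    rw [Dv_sum (fun j => hSd j _ hp₀) (e i)] at hcong
    have hterm : ∀ j : Fin 3, Dv (e i)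
        (fun q => Dv (e j) L q * Dv (e j) L q + Dv (e j) (Dv (e j) L) q) (x, t)
        = 2 * Dv (e j) L (x, t) * Dv (e i) (Dv (e j) L) (x, t)
          + Dv (e i) (Dv (e j) (Dv (e j) L)) (x, t) := by
      intro j
      rw [Dv_add ((dAt (hLi (e j)) hp₀).fun_mul (dAt (hLi (e j)) hp₀)) (dAt (hLiv (e j) (e j)) hp₀),
        Dv_mul (dAt (hLi (e j)) hp₀) (dAt (hLi (e j)) hp₀)]
      ring
    simp only [hterm] at hcong
    exact hcong
  -- symmetry swaps
  have s1 : Dv (e i) (Dv τ L) (x, t) = Dv τ (Dv (e i) L) (x, t) := Dv_comm hUo hL hp₀ τ (e i)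
  have s2 : ∀ j : Fin 3, Dv (e i) (Dv (e j) L) (x, t) = Dv (e j) (Dv (e i) L) (x, t) :=
    fun j => Dv_comm hUo hL hp₀ (e j) (e i)
  have s3 : ∀ j : Fin 3, Dv (e i) (Dv (e j) (Dv (e j) L)) (x, t)
      = Dv (e j) (Dv (e j) (Dv (e i) L)) (x, t) := by
    intro j
    rw [Dv_comm hUo (hLi (e j)) hp₀ (e j) (e i)]
    exact Dv_congr hUo (fun q hq => Dv_comm hUo hL hq (e j) (e i)) hp₀ (e j)
  rw [s1] at hdHJB
  simp only [s2, s3] at hdHJB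
  -- convert the goal
  have hBeq : ∀ (y : Fin 3 → ℝ) {s : ℝ}, s ∈ I → ∀ j : Fin 3,
      B y s j = hbar * Dv (e j) L (y, s) := by
    intro y s hs j
    rw [hB y s j]
    congr 1
    exact deriv_line L j y s (dAt hL (hmem y hs))
  have hpdB : ∀ (y : Fin 3 → ℝ) {s : ℝ}, s ∈ I → ∀ j : Fin 3,
      pd j (fun y s => B y s i) y s = hbar * Dv (e j) (Dv (e i) L) (y, s) := by
    intro y s hs j
    have h1 : pd j (fun y s => B y s i) y s
        = deriv (fun r => (fun q : E3 => hbar * Dv (e i) L q) (Function.update y j r, s)) (y j) := by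
      unfold pd
      congr 1
      funext r
      exact hBeq _ hs i
    rw [h1, deriv_line (fun q => hbar * Dv (e i) L q) j y s
      ((dAt (hLi (e i)) (hmem y hs)).const_mul hbar)]
    exact Dv_const_mul (dAt (hLi (e i)) (hmem y hs)) hbar (e j)
  have hT1 : pt (fun y s => B y s i) x t = hbar * Dv τ (Dv (e i) L) (x, t) := by
    have hev : (fun s => B x s i) =ᶠ[𝓝 t] fun s => (fun q : E3 => hbar * Dv (e i) L q) (x, s) := by
      filter_upwards [hI.mem_nhds ht] with s hs using hBeq x hs i
    unfold pt
    rw [hev.deriv_eq, deriv_timeLine (fun q => hbar * Dv (e i) L q) x t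
      ((dAt (hLi (e i)) hp₀).const_mul hbar)]
    exact Dv_const_mul (dAt (hLi (e i)) hp₀) hbar τ
  have hT3 : ∀ j : Fin 3, pd j (pd j (fun y s => B y s i)) x t
      = hbar * Dv (e j) (Dv (e j) (Dv (e i) L)) (x, t) := by
    intro j
    have h1 : pd j (pd j (fun y s => B y s i)) x t
        = deriv (fun r => (fun q : E3 => hbar * Dv (e j) (Dv (e i) L) q)
            (Function.update x j r, t)) (x j) := by
      unfold pd
      congr 1
      funext r
      exact hpdB _ ht j
    rw [h1, deriv_line (fun q => hbar * Dv (e j) (Dv (e i) L) q) j x t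
      ((dAt (hLiv (e i) (e j)) hp₀).const_mul hbar)]
    exact Dv_const_mul (dAt (hLiv (e i) (e j)) hp₀) hbar (e j)
  have hT4 : pd i V x t = Dv (e i) G (x, t) := deriv_line G i x t (dAt hG hp₀)
  rw [hT1, hT4]
  have hsum2 : (∑ j, B x t j * pd j (fun y s => B y s i) x t)
      = hbar ^ 2 * ∑ j, Dv (e j) L (x, t) * Dv (e j) (Dv (e i) L) (x, t) := by
    rw [Finset.mul_sum]
    refine Finset.sum_congr rfl (fun j _ => ?_)
    rw [hBeq x ht j, hpdB x ht j]
    ring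
  have hsum3 : lap (fun y s => B y s i) x t
      = hbar * ∑ j, Dv (e j) (Dv (e j) (Dv (e i) L)) (x, t) := by
    unfold lap
    rw [Finset.mul_sum]
    exact Finset.sum_congr rfl (fun j _ => hT3 j)
  rw [hsum2, hsum3]
  -- final algebra
  have hsplit : (∑ j, (2 * Dv (e j) L (x, t) * Dv (e j) (Dv (e i) L) (x, t)
      + Dv (e j) (Dv (e j) (Dv (e i) L)) (x, t)))
      = 2 * (∑ j, Dv (e j) L (x, t) * Dv (e j) (Dv (e i) L) (x, t))
        + ∑ j, Dv (e j) (Dv (e j) (Dv (e i) L)) (x, t) := by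
    rw [Finset.sum_add_distrib, Finset.mul_sum]
    congr 1
    exact Finset.sum_congr rfl (fun j _ => by ring)
  rw [hsplit] at hdHJB
  linear_combination hdHJB
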